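/- Let u and v be nonzero polynomials with complex coefficients all of which are algebraic over ℚ, and let r be a rational number. Assume the real function s ↦ s^r · u(s)/v(s) is not constant on the set of positive reals where v does not vanish. Then for every transcendental real number t > 0 with v(t) ≠ 0, the number t^r · u(t)/v(t) is transcendental over ℚ. -/

import Mathlib

open Polynomial

section Aux

/-- Lift a complex polynomial with algebraic coefficients to `algebraicClosure ℚ ℂ`. -/
lemma exists_lift_alg (P : ℂ[X]) (h : ∀ i, IsAlgebraic ℚ (P.coeff i)) :
    ∃ P' : (algebraicClosure ℚ ℂ)[X], P'.map (algebraMap (algebraicClosure ℚ ℂ) ℂ) = P := by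
  rw [← Polynomial.mem_lifts]
  rw [Polynomial.lifts_iff_coeff_lifts]
  intro n
  exact ⟨⟨P.coeff n, mem_algebraicClosure_iff.2 (h n)⟩, rfl⟩

lemma isAlgebraic_of_algClosure_root (P : (algebraicClosure ℚ ℂ)[X]) (hP : P ≠ 0) (z : ℂ)
    (hz : Polynomial.aeval z P = 0) : IsAlgebraic ℚ z := by
  have h1 : IsAlgebraic (algebraicClosure ℚ ℂ) z := ⟨P, hP, hz⟩
  have h2 : IsIntegral (algebraicClosure ℚ ℂ) z := h1.isIntegral
  haveI : Algebra.IsIntegral ℚ (algebraicClosure ℚ ℂ) := (algebraicClosure.isAlgebraic ℚ ℂ).isIntegral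
  exact (isIntegral_trans (R := ℚ) z h2).isAlgebraic

end Aux

/-- A transcendence criterion: if `u, v` are nonzero polynomials with algebraic
complex coefficients, `r` is rational, and `s ↦ s^r · u(s)/v(s)` is not constant
on the positive reals where `v` does not vanish, then for every transcendental
real `t > 0` with `v(t) ≠ 0`, the number `t^r · u(t)/v(t)` is transcendental. -/
theorem transcendence_criterion (u v : ℂ[X]) (hu : u ≠ 0) (hv : v ≠ 0)
    (hualg : ∀ i, IsAlgebraic ℚ (u.coeff i)) (hvalg : ∀ i, IsAlgebraic ℚ (v.coeff i))
    (r : ℚ)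
    (hnc : ¬ ∃ c : ℂ, ∀ s : ℝ, 0 < s → v.eval (s : ℂ) ≠ 0 →
      ((s ^ (r : ℝ) : ℝ) : ℂ) * u.eval (s : ℂ) / v.eval (s : ℂ) = c)
    (t : ℝ) (ht : Transcendental ℚ t) (ht0 : 0 < t) (hvt : v.eval (t : ℂ) ≠ 0) :
    Transcendental ℚ (((t ^ (r : ℝ) : ℝ) : ℂ) * u.eval (t : ℂ) / v.eval (t : ℂ)) := by
  set w : ℂ := ((t ^ (r : ℝ) : ℝ) : ℂ) * u.eval (t : ℂ) / v.eval (t : ℂ) with hw_def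
  intro hw
  -- t is transcendental as a complex number
  have ht' : Transcendental ℚ (t : ℂ) := by
    have hinj : Function.Injective (algebraMap ℝ ℂ) := Complex.ofReal_injective
    exact (transcendental_algebraMap_iff (R := ℚ) hinj).2 ht
  set q : ℕ := r.den with hq_def
  set p : ℤ := r.num with hp_def
  have hq0 : q ≠ 0 := r.den_nz
  set m : ℕ := p.toNat with hm_def
  set n : ℕ := (-p).toNat with hn_def
  have hmn : (m : ℤ) = p + n := by omega
  have hrq : (r : ℝ) * q = (p : ℝ) := by
    have hd : ((q : ℚ)) ≠ 0 := by exact_mod_cast hq0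
    have : (r * (q : ℚ) : ℚ) = (p : ℚ) := by
      conv_lhs => rw [← Rat.num_div_den r]
      rw [div_mul_cancel₀ _ hd]
    exact_mod_cast this
  -- key real identity at t
  have hkeyt : (t ^ (r : ℝ)) ^ q * t ^ n = t ^ m := by
    have h1 : (t ^ (r : ℝ)) ^ (q : ℕ) = t ^ ((r : ℝ) * q) := by
      rw [← Real.rpow_natCast (t ^ (r : ℝ)) q, ← Real.rpow_mul ht0.le]
    have h2 : (t : ℝ) ^ (n : ℕ) = t ^ ((n : ℤ)) := by rw [zpow_natCast]
    have h3 : (t : ℝ) ^ (m : ℕ) = t ^ ((m : ℤ)) := by rw [zpow_natCast]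
    rw [h1, hrq, Real.rpow_intCast t p, h2, h3, hmn, zpow_add₀ (ne_of_gt ht0)]
  have hkeytC : (((t ^ (r : ℝ) : ℝ)) : ℂ) ^ q * (t : ℂ) ^ n = (t : ℂ) ^ m := by
    exact_mod_cast congrArg (Complex.ofReal) hkeyt
  have hwt : w * v.eval (t : ℂ) = ((t ^ (r : ℝ) : ℝ) : ℂ) * u.eval (t : ℂ) :=
    div_mul_cancel₀ _ hvt
  -- lift u, v, and build the polynomial Q'
  obtain ⟨u', hu'⟩ := exists_lift_alg u hualg
  obtain ⟨v', hv'⟩ := exists_lift_alg v hvalg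
  set w' : algebraicClosure ℚ ℂ := ⟨w, mem_algebraicClosure_iff.2 hw⟩ with hw'_def
  set Q' : (algebraicClosure ℚ ℂ)[X] := C (w' ^ q) * (X ^ n * v' ^ q) - X ^ m * u' ^ q
    with hQ'_def
  set Q : ℂ[X] := C (w ^ q) * (X ^ n * v ^ q) - X ^ m * u ^ q with hQ_def
  have hQmap : Q'.map (algebraMap (algebraicClosure ℚ ℂ) ℂ) = Q := by
    have hwmap : algebraMap (algebraicClosure ℚ ℂ) ℂ w' = w := rfl
    simp only [hQ'_def, hQ_def, Polynomial.map_sub, Polynomial.map_mul, Polynomial.map_pow,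
      Polynomial.map_C, Polynomial.map_X, hu', hv', map_pow, hwmap]
  have hQt : Q.eval (t : ℂ) = 0 := by
    have h1 : (w * v.eval (t : ℂ)) ^ q
        = (((t ^ (r : ℝ) : ℝ)) : ℂ) ^ q * u.eval (t : ℂ) ^ q := by
      rw [hwt]; ring
    simp only [hQ_def, eval_sub, eval_mul, eval_pow, eval_C, eval_X]
    linear_combination (t : ℂ) ^ n * h1 + u.eval (t : ℂ) ^ q * hkeytC
  by_cases hQ'0 : Q' = 0
  · -- constant case
    have hQ0 : Q = 0 := by rw [← hQmap, hQ'0, Polynomial.map_zero]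
    have hE : C (w ^ q) * ((X : ℂ[X]) ^ n * v ^ q) = X ^ m * u ^ q := by
      have := sub_eq_zero.1 hQ0
      exact this
    have hw0 : w ≠ 0 := by
      intro h
      rw [h] at hE
      simp only [zero_pow hq0, map_zero, zero_mul] at hE
      have : u ^ q = 0 := by
        rcases mul_eq_zero.1 hE.symm with h' | h'
        · exact absurd h' (pow_ne_zero _ X_ne_zero)
        · exact h'
      exact hu (pow_eq_zero_iff hq0 |>.1 this)
    -- factor out powers of X
    obtain ⟨u₁, hufact, hXu₁⟩ := u.exists_eq_pow_rootMultiplicity_mul_and_not_dvd hu 0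
    obtain ⟨v₁, hvfact, hXv₁⟩ := v.exists_eq_pow_rootMultiplicity_mul_and_not_dvd hv 0
    rw [map_zero, sub_zero] at hufact hXu₁ hvfact hXv₁
    set a : ℕ := u.rootMultiplicity 0 with ha_def
    set b : ℕ := v.rootMultiplicity 0 with hb_def
    have hu₁0 : u₁ ≠ 0 := by
      intro h; rw [h, mul_zero] at hufact; exact hu hufact
    have hv₁0 : v₁ ≠ 0 := by
      intro h; rw [h, mul_zero] at hvfact; exact hv hvfact
    have hu₁root : ¬ IsRoot u₁ 0 := fun h => hXu₁ (by
      have := (dvd_iff_isRoot (p := u₁) (a := 0)).2 h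
      simpa using this)
    have hv₁root : ¬ IsRoot v₁ 0 := fun h => hXv₁ (by
      have := (dvd_iff_isRoot (p := v₁) (a := 0)).2 h
      simpa using this)
    have hE1 : (X : ℂ[X]) ^ (n + q * b) * (C (w ^ q) * v₁ ^ q)
        = X ^ (m + q * a) * u₁ ^ q := by
      rw [hufact, hvfact] at hE
      linear_combination hE
    -- compare root multiplicities at 0
    have hXj : ∀ j : ℕ, rootMultiplicity 0 ((X : ℂ[X]) ^ j) = j := by
      intro j
      have := rootMultiplicity_X_sub_C_pow (R := ℂ) 0 j
      simpa using this
    have hCv : rootMultiplicity 0 (C (w ^ q) * v₁ ^ q) = 0 := by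
      apply rootMultiplicity_eq_zero
      simp only [IsRoot, eval_mul, eval_C, eval_pow]
      exact mul_ne_zero (pow_ne_zero _ hw0) (pow_ne_zero _ (by exact hv₁root))
    have hCu : rootMultiplicity 0 (u₁ ^ q) = 0 := by
      apply rootMultiplicity_eq_zero
      simp only [IsRoot, eval_pow]
      exact pow_ne_zero _ hu₁root
    have hexp : n + q * b = m + q * a := by
      have hne : (X : ℂ[X]) ^ (n + q * b) * (C (w ^ q) * v₁ ^ q) ≠ 0 :=
        mul_ne_zero (pow_ne_zero _ X_ne_zero)
          (mul_ne_zero (C_ne_zero.2 (pow_ne_zero _ hw0)) (pow_ne_zero _ hv₁0))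
      have hne2 : (X : ℂ[X]) ^ (m + q * a) * u₁ ^ q ≠ 0 :=
        mul_ne_zero (pow_ne_zero _ X_ne_zero) (pow_ne_zero _ hu₁0)
      have h1 := rootMultiplicity_mul (x := (0 : ℂ)) hne
      have h2 := rootMultiplicity_mul (x := (0 : ℂ)) (hE1 ▸ hne)
      rw [hE1] at h1
      rw [h1] at h2
      rw [hXj, hXj, hCv, hCu] at h2
      omega
    have hcore : C (w ^ q) * v₁ ^ q = u₁ ^ q := by
      rw [hexp] at hE1
      exact mul_left_cancel₀ (pow_ne_zero _ X_ne_zero) hE1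
    -- u₁ and v₁ are associated
    have hdvd1 : v₁ ^ q ∣ u₁ ^ q := Dvd.intro_left _ hcore
    have hdvd2 : u₁ ^ q ∣ v₁ ^ q := by
      refine Dvd.intro_left (C ((w ^ q)⁻¹)) ?_
      rw [← hcore, ← mul_assoc, ← map_mul, inv_mul_cancel₀ (pow_ne_zero _ hw0), map_one, one_mul]
    have hdvd1' : v₁ ∣ u₁ := (IsIntegrallyClosed.pow_dvd_pow_iff hq0).1 hdvd1
    have hdvd2' : u₁ ∣ v₁ := (IsIntegrallyClosed.pow_dvd_pow_iff hq0).1 hdvd2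
    obtain ⟨unit, hunit⟩ := associated_of_dvd_dvd hdvd1' hdvd2'
    obtain ⟨d, hd_unit, hdC⟩ := Polynomial.isUnit_iff.1 unit.isUnit
    have hu₁eq : u₁ = v₁ * C d := by rw [hdC, hunit]
    -- the exponent relation
    have hrab : (r : ℝ) + a = b := by
      have hz : (q : ℤ) * b = q * a + p := by omega
      have hzq : (q : ℚ) * b = q * a + p := by exact_mod_cast hz
      have hqQ : (q : ℚ) ≠ 0 := by exact_mod_cast hq0
      have hrq' : (r : ℚ) * q = (p : ℚ) := by
        conv_lhs => rw [← Rat.num_div_den r]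
        rw [hq_def, hp_def, div_mul_cancel₀ _ (by exact_mod_cast hq0 : ((r.den : ℚ)) ≠ 0)]
      have : (r : ℚ) + a = b := by
        have := mul_left_cancel₀ hqQ (by linarith [hzq, hrq'] :
          (q : ℚ) * ((r : ℚ) + a) = (q : ℚ) * b)
        exact this
      exact_mod_cast this
    exact hnc ⟨d, fun s hs hvs => by
      have hsC : (s : ℂ) ≠ 0 := by exact_mod_cast ne_of_gt hs
      have hve : v.eval (s : ℂ) = (s : ℂ) ^ b * v₁.eval (s : ℂ) := by
        rw [hvfact]; simp
      have hv₁s : v₁.eval (s : ℂ) ≠ 0 := by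
        intro h; apply hvs; rw [hve, h, mul_zero]
      have hue : u.eval (s : ℂ) = (s : ℂ) ^ a * (v₁.eval (s : ℂ) * d) := by
        rw [hufact, hu₁eq]; simp
      have hs1 : s ^ (r : ℝ) * s ^ a = s ^ b := by
        rw [← Real.rpow_natCast s a, ← Real.rpow_natCast s b, ← Real.rpow_add hs, ← hrab]
      have hs1C : (((s ^ (r : ℝ) : ℝ)) : ℂ) * (s : ℂ) ^ a = (s : ℂ) ^ b := by
        exact_mod_cast congrArg (Complex.ofReal) hs1
      rw [hue, hve, div_eq_iff (mul_ne_zero (pow_ne_zero _ hsC) hv₁s)]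
      linear_combination (v₁.eval (s : ℂ) * d) * hs1C⟩
  · -- Q' ≠ 0 : t is algebraic, contradiction
    apply ht'
    apply isAlgebraic_of_algClosure_root Q' hQ'0
    rw [aeval_def, ← eval_map, hQmap]
    exact hQt
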